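/- Define G : [0,1] × [0,1] → ℝ by G(t,s) = t(1−s) if t ≤ s and G(t,s) = s(1−t) if s ≤ t. Let f : [0,1] → ℝ be continuous with f ≥ 0, f not identically zero, set u₀(t) = ∫₀¹ G(t,s) f(s) ds, and assume the smallness condition 4·B·‖u₀‖_∞ < 1, where B = max_{t∈[0,1]} ∫₀¹ G(t,s) ds = 1/8. Then the boundary value problem −u″(t) = u(t)² + f(t) on [0,1] with u(0) = u(1) = 0 has at least two distinct nonnegative solutions u ∈ C²([0,1]). -/

import Mathlib

set_option maxHeartbeats 1000000

open Set intervalIntegral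

/-- The Green's function of `−d²/dt²` on `(0,1)` with Dirichlet boundary conditions. -/
noncomputable def greenG (t s : ℝ) : ℝ := if t ≤ s then t * (1 - s) else s * (1 - t)

/-- `u` is a `C²` solution on `[0,1]` of the BVP `−u″ = u² + f`, `u(0) = u(1) = 0`. -/
def IsBVPSolution (f u : ℝ → ℝ) : Prop :=
  ContinuousOn u (Icc 0 1) ∧
  ∃ u' u'' : ℝ → ℝ,
    (∀ t ∈ Icc (0 : ℝ) 1, HasDerivWithinAt u (u' t) (Icc 0 1) t) ∧
    (∀ t ∈ Icc (0 : ℝ) 1, HasDerivWithinAt u' (u'' t) (Icc 0 1) t) ∧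
    ContinuousOn u'' (Icc 0 1) ∧
    (∀ t ∈ Icc (0 : ℝ) 1, -u'' t = u t ^ 2 + f t) ∧
    u 0 = 0 ∧ u 1 = 0

namespace BVPX

/-- clamp to [0,1] -/
noncomputable def cl (t : ℝ) : ℝ := min 1 (max 0 t)

lemma cl_mem (t : ℝ) : cl t ∈ Icc (0:ℝ) 1 :=
  ⟨le_min zero_le_one (le_max_left 0 t), min_le_left _ _⟩

lemma cl_eq {t : ℝ} (ht : t ∈ Icc (0:ℝ) 1) : cl t = t := by
  simp only [cl, max_eq_right ht.1, min_eq_right ht.2]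

lemma continuous_cl : Continuous cl :=
  continuous_const.min (continuous_const.max continuous_id)

/-- capped square nonlinearity -/
noncomputable def gc (κ x : ℝ) : ℝ := (min (max x 0) κ)^2

lemma gc_nonneg (κ x : ℝ) : 0 ≤ gc κ x := sq_nonneg _

lemma gc_le_sq {κ x r : ℝ} (hκ : 0 ≤ κ) (hr : max x 0 ≤ r) : gc κ x ≤ r^2 := by
  have h0 : 0 ≤ min (max x 0) κ := le_min (le_max_right x 0) hκ
  have h1 : min (max x 0) κ ≤ r := (min_le_left _ _).trans hr
  exact pow_le_pow_left₀ h0 h1 2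

lemma gc_le_kappa_sq {κ : ℝ} (x : ℝ) (hκ : 0 ≤ κ) : gc κ x ≤ κ^2 := by
  have h0 : 0 ≤ min (max x 0) κ := le_min (le_max_right x 0) hκ
  exact pow_le_pow_left₀ h0 (min_le_right _ _) 2

lemma gc_eq_sq_max {κ x : ℝ} (h : max x 0 ≤ κ) : gc κ x = max x 0 ^ 2 := by
  rw [gc, min_eq_left h]

lemma gc_lip {κ : ℝ} (hκ : 0 ≤ κ) (x y : ℝ) : |gc κ x - gc κ y| ≤ 2*κ*|x - y| := by
  set a := min (max x 0) κ with ha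
  set b := min (max y 0) κ with hb
  have ha0 : 0 ≤ a := le_min (le_max_right _ _) hκ
  have hb0 : 0 ≤ b := le_min (le_max_right _ _) hκ
  have haκ : a ≤ κ := min_le_right _ _
  have hbκ : b ≤ κ := min_le_right _ _
  have hab : |a - b| ≤ |x - y| := by
    have h1 : |a - b| ≤ |max x 0 - max y 0| := by
      rcases le_total (max x 0) κ with h | h
      · rcases le_total (max y 0) κ with h' | h'
        · rw [ha, hb, min_eq_left h, min_eq_left h']
        · rw [ha, hb, min_eq_left h, min_eq_right h']
          rw [abs_sub_comm (max x 0)]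
          rw [abs_of_nonneg (by linarith), abs_of_nonpos (by linarith)]
          linarith
      · rcases le_total (max y 0) κ with h' | h'
        · rw [ha, hb, min_eq_right h, min_eq_left h']
          rw [abs_of_nonneg (by linarith), abs_of_nonneg (by linarith)]
          linarith
        · rw [ha, hb, min_eq_right h, min_eq_right h']
          simp
    have h2 : |max x 0 - max y 0| ≤ |x - y| := abs_max_sub_max_le_abs x y 0
    exact h1.trans h2
  have key : |a^2 - b^2| = |a + b| * |a - b| := by
    rw [← abs_mul]; ring_nf
  rw [gc, gc, ← ha, ← hb, key]
  have h3 : |a + b| ≤ 2*κ := by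
    rw [abs_of_nonneg (by linarith)]; linarith
  calc |a + b| * |a - b| ≤ (2*κ) * |x - y| :=
        mul_le_mul h3 hab (abs_nonneg _) (by linarith)
    _ = 2*κ*|x-y| := by ring

/-- extension of a continuous map on [0,1] to ℝ by clamping -/
noncomputable def ext (u : C(Icc (0:ℝ) 1, ℝ)) (t : ℝ) : ℝ := u ⟨cl t, cl_mem t⟩

lemma continuous_ext (u : C(Icc (0:ℝ) 1, ℝ)) : Continuous (ext u) :=
  u.continuous.comp (Continuous.subtype_mk continuous_cl _)

lemma ext_eq (u : C(Icc (0:ℝ) 1, ℝ)) {t : ℝ} (ht : t ∈ Icc (0:ℝ) 1) :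
    ext u t = u ⟨t, ht⟩ := by
  simp only [ext]
  congr 1
  exact Subtype.ext (cl_eq ht)

lemma abs_ext_sub_le (u v : C(Icc (0:ℝ) 1, ℝ)) (t : ℝ) :
    |ext u t - ext v t| ≤ dist u v := by
  have := ContinuousMap.dist_apply_le_dist (f := u) (g := v) ⟨cl t, cl_mem t⟩
  rwa [Real.dist_eq] at this

end BVPX

namespace BVPX

structure Setup where
  q : ℝ → ℝ
  F : ℝ
  κ : ℝ
  hq : Continuous q
  hq0 : ∀ t, 0 ≤ q t
  hqF : ∀ t, q t ≤ F
  hF0 : 0 ≤ F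
  hκeq : κ = F + 29415

namespace Setup

variable (S : Setup)

lemma hκ1 : 1 ≤ S.κ := by have := S.hF0; rw [S.hκeq]; linarith

lemma hκ0 : 0 ≤ S.κ := le_trans zero_le_one S.hκ1

/-- the nonlinear integrand -/
noncomputable def hf (u : C(Icc (0:ℝ) 1, ℝ)) (s : ℝ) : ℝ := gc S.κ (ext u s) + S.q s

lemma hf_cont (u : C(Icc (0:ℝ) 1, ℝ)) : Continuous (S.hf u) := by
  unfold hf gc
  exact ((((continuous_ext u).max continuous_const).min continuous_const).pow 2).fun_add S.hq

lemma hf_nonneg (u : C(Icc (0:ℝ) 1, ℝ)) (s : ℝ) : 0 ≤ S.hf u s :=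
  add_nonneg (gc_nonneg _ _) (S.hq0 s)

noncomputable def Hb : ℝ := S.κ^2 + S.F

lemma Hb_pos : 0 < S.Hb := by
  have h1 := S.hκ1
  have := S.hF0
  have : (1:ℝ) ≤ S.κ^2 := by nlinarith
  unfold Hb; linarith

lemma hf_le_H (u : C(Icc (0:ℝ) 1, ℝ)) (s : ℝ) : S.hf u s ≤ S.Hb := by
  unfold hf Hb
  exact add_le_add (gc_le_kappa_sq _ S.hκ0) (S.hqF s)

/-- the Volterra operator as a real function -/
noncomputable def V (c : ℝ) (u : C(Icc (0:ℝ) 1, ℝ)) (t : ℝ) : ℝ :=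
  c * t - ∫ s in (0:ℝ)..t, (t - s) * S.hf u s

lemma V_eq (c : ℝ) (u : C(Icc (0:ℝ) 1, ℝ)) (t : ℝ) :
    S.V c u t = c * t - (t * (∫ s in (0:ℝ)..t, S.hf u s) - ∫ s in (0:ℝ)..t, s * S.hf u s) := by
  unfold V
  congr 1
  have h1 : (∫ s in (0:ℝ)..t, (t - s) * S.hf u s)
      = ∫ s in (0:ℝ)..t, (t * S.hf u s - s * S.hf u s) := by
    apply integral_congr; intro s _; ring
  rw [h1, integral_sub ((continuous_const.fun_mul (S.hf_cont u)).intervalIntegrable _ _)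
      ((continuous_id'.fun_mul (S.hf_cont u)).intervalIntegrable _ _), integral_const_mul]

lemma V_cont (c : ℝ) (u : C(Icc (0:ℝ) 1, ℝ)) : Continuous (S.V c u) := by
  have h1 : Continuous fun t => ∫ s in (0:ℝ)..t, S.hf u s :=
    intervalIntegral.continuous_primitive (fun a b => (S.hf_cont u).intervalIntegrable a b) 0
  have h2 : Continuous fun t => ∫ s in (0:ℝ)..t, s * S.hf u s :=
    intervalIntegral.continuous_primitive
      (fun a b => (continuous_id'.fun_mul (S.hf_cont u)).intervalIntegrable a b) 0
  have h3 : S.V c u = fun t => c * t - (t * (∫ s in (0:ℝ)..t, S.hf u s)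
      - ∫ s in (0:ℝ)..t, s * S.hf u s) := funext (S.V_eq c u)
  rw [h3]
  exact (continuous_const.fun_mul continuous_id).fun_sub ((continuous_id.fun_mul h1).fun_sub h2)

/-- the operator on C([0,1]) -/
noncomputable def Phi (c : ℝ) (u : C(Icc (0:ℝ) 1, ℝ)) : C(Icc (0:ℝ) 1, ℝ) :=
  ⟨fun x => S.V c u x, (S.V_cont c u).comp continuous_subtype_val⟩

lemma Phi_apply (c : ℝ) (u : C(Icc (0:ℝ) 1, ℝ)) (x : Icc (0:ℝ) 1) :
    S.Phi c u x = S.V c u x := rfl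

lemma ext_Phi (c : ℝ) (u : C(Icc (0:ℝ) 1, ℝ)) {t : ℝ} (ht : t ∈ Icc (0:ℝ) 1) :
    ext (S.Phi c u) t = S.V c u t := by
  rw [ext_eq _ ht]; rfl

lemma hf_sub_le (u v : C(Icc (0:ℝ) 1, ℝ)) (s : ℝ) :
    |S.hf u s - S.hf v s| ≤ 2 * S.κ * |ext u s - ext v s| := by
  have : S.hf u s - S.hf v s = gc S.κ (ext u s) - gc S.κ (ext v s) := by unfold hf; ring
  rw [this]
  exact gc_lip S.hκ0 _ _

lemma intgW (u : C(Icc (0:ℝ) 1, ℝ)) (t r a b : ℝ) :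
    IntervalIntegrable (fun s => (t - s) * S.hf u s) MeasureTheory.volume a b :=
  ((continuous_const.fun_sub continuous_id').fun_mul (S.hf_cont u)).intervalIntegrable a b

lemma V_sub_eq (c : ℝ) (u v : C(Icc (0:ℝ) 1, ℝ)) (t : ℝ) :
    S.V c u t - S.V c v t = -∫ s in (0:ℝ)..t, (t - s) * (S.hf u s - S.hf v s) := by
  unfold V
  have h1 := integral_sub (S.intgW u t 0 0 t) (S.intgW v t 0 0 t)
  have h2 : (∫ s in (0:ℝ)..t, ((t-s) * S.hf u s - (t-s) * S.hf v s))
      = ∫ s in (0:ℝ)..t, (t-s) * (S.hf u s - S.hf v s) := by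
    apply integral_congr; intro s _; ring
  rw [h2] at h1
  linarith

/-- key iteration bound -/
lemma V_sub_bound (c : ℝ) (u v : C(Icc (0:ℝ) 1, ℝ)) (k : ℕ) (D : ℝ) (hD : 0 ≤ D)
    (hbd : ∀ s ∈ Icc (0:ℝ) 1, |ext u s - ext v s| ≤ (2*S.κ)^k * s^k / (k.factorial : ℝ) * D) :
    ∀ t ∈ Icc (0:ℝ) 1,
      |S.V c u t - S.V c v t| ≤ (2*S.κ)^(k+1) * t^(k+1) / ((k+1).factorial : ℝ) * D := by
  intro t ht
  have hκ0 := S.hκ0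
  rw [S.V_sub_eq c u v t, abs_neg]
  have hint : Continuous fun s => (t - s) * (S.hf u s - S.hf v s) :=
    (continuous_const.fun_sub continuous_id').fun_mul ((S.hf_cont u).fun_sub (S.hf_cont v))
  calc |∫ s in (0:ℝ)..t, (t - s) * (S.hf u s - S.hf v s)|
      ≤ ∫ s in (0:ℝ)..t, |(t - s) * (S.hf u s - S.hf v s)| :=
        abs_integral_le_integral_abs ht.1
    _ ≤ ∫ s in (0:ℝ)..t, (2*S.κ)^(k+1) * D / (k.factorial : ℝ) * s^k := by
        apply integral_mono_on ht.1 (hint.abs.intervalIntegrable _ _)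
          ((continuous_const.fun_mul (continuous_pow k)).intervalIntegrable _ _)
        intro s hs
        have hs01 : s ∈ Icc (0:ℝ) 1 := ⟨hs.1, hs.2.trans ht.2⟩
        have h1 : |(t - s) * (S.hf u s - S.hf v s)| = |t - s| * |S.hf u s - S.hf v s| :=
          abs_mul _ _
        have h2 : |t - s| ≤ 1 := by
          rw [abs_of_nonneg (by linarith [hs.2])]
          linarith [hs.1, ht.2]
        have h3 : |S.hf u s - S.hf v s| ≤ 2*S.κ * ((2*S.κ)^k * s^k / (k.factorial : ℝ) * D) :=
          (S.hf_sub_le u v s).trans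
            (mul_le_mul_of_nonneg_left (hbd s hs01) (by linarith))
        have h4 : (0:ℝ) ≤ |S.hf u s - S.hf v s| := abs_nonneg _
        rw [h1]
        calc |t - s| * |S.hf u s - S.hf v s| ≤ 1 * |S.hf u s - S.hf v s| :=
              mul_le_mul_of_nonneg_right h2 h4
          _ = |S.hf u s - S.hf v s| := one_mul _
          _ ≤ 2*S.κ * ((2*S.κ)^k * s^k / (k.factorial : ℝ) * D) := h3
          _ = (2*S.κ)^(k+1) * D / (k.factorial : ℝ) * s^k := by ring
    _ = (2*S.κ)^(k+1) * D / (k.factorial : ℝ) * (t^(k+1) / (k+1)) := by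
        rw [integral_const_mul, integral_pow]
        norm_num
    _ = (2*S.κ)^(k+1) * t^(k+1) / ((k+1).factorial : ℝ) * D := by
        rw [Nat.factorial_succ]
        have hk : ((k.factorial : ℝ)) ≠ 0 := Nat.cast_ne_zero.mpr k.factorial_ne_zero
        have hk1 : ((k:ℝ) + 1) ≠ 0 := by positivity
        field_simp
        push_cast
        ring

lemma iter_bound (c : ℝ) (n : ℕ) (u v : C(Icc (0:ℝ) 1, ℝ)) :
    ∀ t ∈ Icc (0:ℝ) 1, |ext ((S.Phi c)^[n] u) t - ext ((S.Phi c)^[n] v) t|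
      ≤ (2*S.κ)^n * t^n / (n.factorial : ℝ) * dist u v := by
  induction n with
  | zero =>
      intro t ht
      simpa using abs_ext_sub_le u v t
  | succ k ih =>
      intro t ht
      rw [Function.iterate_succ_apply', Function.iterate_succ_apply',
        S.ext_Phi c _ ht, S.ext_Phi c _ ht]
      exact S.V_sub_bound c _ _ k (dist u v) dist_nonneg
        (fun s hs => ih s hs) t ht

lemma iter_dist (c : ℝ) (n : ℕ) (u v : C(Icc (0:ℝ) 1, ℝ)) :
    dist ((S.Phi c)^[n] u) ((S.Phi c)^[n] v) ≤ (2*S.κ)^n / (n.factorial : ℝ) * dist u v := by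
  have hκ0 := S.hκ0
  have hR : 0 ≤ (2*S.κ)^n / (n.factorial : ℝ) * dist u v := by positivity
  rw [ContinuousMap.dist_le hR]
  intro x
  have h := S.iter_bound c n u v x x.2
  rw [ext_eq _ x.2, ext_eq _ x.2] at h
  rw [Real.dist_eq]
  simp only [Subtype.coe_eta] at h
  refine h.trans ?_
  have hx1 : (x:ℝ)^n ≤ 1 := pow_le_one₀ x.2.1 x.2.2
  have : (2*S.κ)^n * (x:ℝ)^n ≤ (2*S.κ)^n * 1 :=
    mul_le_mul_of_nonneg_left hx1 (by positivity)
  have hfac : (0:ℝ) < (n.factorial : ℝ) := by positivity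
  apply mul_le_mul_of_nonneg_right _ dist_nonneg
  rw [div_le_div_iff_of_pos_right hfac]
  nlinarith

lemma exists_n : ∃ n : ℕ, ((2*S.κ)^n / (n.factorial : ℝ)) ≤ 1/2 := by
  have h := FloorSemiring.tendsto_pow_div_factorial_atTop (2*S.κ)
  have h2 := h.eventually_le_const (by norm_num : (0:ℝ) < 1/2)
  exact h2.exists

/-- number of iterations making the operator a contraction -/
noncomputable def nIt : ℕ := S.exists_n.choose

lemma nIt_spec : ((2*S.κ)^S.nIt / (S.nIt.factorial : ℝ)) ≤ 1/2 := S.exists_n.choose_spec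

lemma contractingWith (c : ℝ) : ContractingWith (1/2 : NNReal) ((S.Phi c)^[S.nIt]) := by
  constructor
  · rw [← NNReal.coe_lt_coe]; norm_num
  · apply LipschitzWith.of_dist_le_mul
    intro u v
    refine (S.iter_dist c S.nIt u v).trans ?_
    have : ((1/2 : NNReal) : ℝ) = 1/2 := by norm_num
    rw [this]
    exact mul_le_mul_of_nonneg_right S.nIt_spec dist_nonneg

lemma exists_fix (c : ℝ) : ∃ u, S.Phi c u = u := by
  set x := (S.contractingWith c).fixedPoint ((S.Phi c)^[S.nIt]) with hx
  have hfix : Function.IsFixedPt ((S.Phi c)^[S.nIt]) x :=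
    ContractingWith.fixedPoint_isFixedPt _
  refine ⟨x, ?_⟩
  have hy : Function.IsFixedPt ((S.Phi c)^[S.nIt]) (S.Phi c x) := by
    show ((S.Phi c)^[S.nIt]) (S.Phi c x) = S.Phi c x
    rw [← Function.iterate_succ_apply, Function.iterate_succ_apply', hfix]
  have h1 := (S.contractingWith c).fixedPoint_unique hy
  have h2 := (S.contractingWith c).fixedPoint_unique hfix
  rw [h1, ← h2]

/-- the fixed point -/
noncomputable def usol (c : ℝ) : C(Icc (0:ℝ) 1, ℝ) := (S.exists_fix c).choose

lemma usol_fixed (c : ℝ) : S.Phi c (S.usol c) = S.usol c := (S.exists_fix c).choose_spec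

/-- the solution as a real function -/
noncomputable def Uf (c : ℝ) : ℝ → ℝ := S.V c (S.usol c)

lemma Uf_eq_ext (c : ℝ) {t : ℝ} (ht : t ∈ Icc (0:ℝ) 1) : S.Uf c t = ext (S.usol c) t := by
  conv_rhs => rw [← S.usol_fixed c]
  rw [S.ext_Phi c _ ht]; rfl

noncomputable def phiS (c : ℝ) : ℝ := S.Uf c 1

noncomputable def rhoS (c : ℝ) : ℝ := ‖S.usol c ⊔ 0‖

lemma Uf_cont (c : ℝ) : Continuous (S.Uf c) := S.V_cont c _

lemma Phi_dist_c (c c' : ℝ) (u : C(Icc (0:ℝ) 1, ℝ)) :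
    dist (S.Phi c u) (S.Phi c' u) ≤ |c - c'| := by
  rw [ContinuousMap.dist_le (abs_nonneg _)]
  intro x
  rw [Real.dist_eq, Phi_apply, Phi_apply]
  have : S.V c u x - S.V c' u x = (c - c') * x := by unfold V; ring
  rw [this, abs_mul]
  have hx : |(x:ℝ)| ≤ 1 := by rw [abs_of_nonneg x.2.1]; exact x.2.2
  calc |c - c'| * |(x:ℝ)| ≤ |c - c'| * 1 := mul_le_mul_of_nonneg_left hx (abs_nonneg _)
    _ = |c - c'| := mul_one _

lemma Phi_lip_u (c : ℝ) (u v : C(Icc (0:ℝ) 1, ℝ)) :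
    dist (S.Phi c u) (S.Phi c v) ≤ 2*S.κ * dist u v := by
  have h := S.iter_dist c 1 u v
  simpa using h

lemma iter_c_bound (n : ℕ) (c c' : ℝ) (u : C(Icc (0:ℝ) 1, ℝ)) :
    dist ((S.Phi c)^[n] u) ((S.Phi c')^[n] u) ≤ (2*S.κ+1)^n * |c - c'| := by
  have hκ0 := S.hκ0
  induction n with
  | zero => simp
  | succ k ih =>
      rw [Function.iterate_succ_apply', Function.iterate_succ_apply']
      calc dist (S.Phi c ((S.Phi c)^[k] u)) (S.Phi c' ((S.Phi c')^[k] u))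
          ≤ dist (S.Phi c ((S.Phi c)^[k] u)) (S.Phi c ((S.Phi c')^[k] u))
            + dist (S.Phi c ((S.Phi c')^[k] u)) (S.Phi c' ((S.Phi c')^[k] u)) :=
            dist_triangle _ _ _
        _ ≤ 2*S.κ * dist ((S.Phi c)^[k] u) ((S.Phi c')^[k] u) + |c - c'| :=
            add_le_add (S.Phi_lip_u c _ _) (S.Phi_dist_c c c' _)
        _ ≤ 2*S.κ * ((2*S.κ+1)^k * |c - c'|) + |c - c'| := by
            have := mul_le_mul_of_nonneg_left ih (by linarith : (0:ℝ) ≤ 2*S.κ)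
            linarith
        _ ≤ (2*S.κ+1)^(k+1) * |c - c'| := by
            have h1 : (1:ℝ) ≤ (2*S.κ+1)^k := one_le_pow₀ (by linarith)
            have h2 : (0:ℝ) ≤ |c - c'| := abs_nonneg _
            have h3 : (2*S.κ+1)^(k+1) = (2*S.κ)*(2*S.κ+1)^k + (2*S.κ+1)^k := by ring
            rw [h3]
            nlinarith

lemma usol_lip (c c' : ℝ) :
    dist (S.usol c) (S.usol c') ≤ 2*(2*S.κ+1)^S.nIt * |c - c'| := by
  set n := S.nIt
  have hu : ((S.Phi c)^[n]) (S.usol c) = S.usol c :=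
    Function.IsFixedPt.iterate (S.usol_fixed c) n
  have hv : ((S.Phi c')^[n]) (S.usol c') = S.usol c' :=
    Function.IsFixedPt.iterate (S.usol_fixed c') n
  have key : dist (S.usol c) (S.usol c')
      ≤ 1/2 * dist (S.usol c) (S.usol c') + (2*S.κ+1)^n * |c - c'| := by
    calc dist (S.usol c) (S.usol c')
        = dist (((S.Phi c)^[n]) (S.usol c)) (((S.Phi c')^[n]) (S.usol c')) := by rw [hu, hv]
      _ ≤ dist (((S.Phi c)^[n]) (S.usol c)) (((S.Phi c)^[n]) (S.usol c'))
          + dist (((S.Phi c)^[n]) (S.usol c')) (((S.Phi c')^[n]) (S.usol c')) :=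
          dist_triangle _ _ _
      _ ≤ 1/2 * dist (S.usol c) (S.usol c') + (2*S.κ+1)^n * |c - c'| := by
          apply add_le_add
          · refine (S.iter_dist c n _ _).trans ?_
            exact mul_le_mul_of_nonneg_right S.nIt_spec dist_nonneg
          · exact S.iter_c_bound n c c' _
  linarith

lemma phi_lip (c c' : ℝ) : |S.phiS c - S.phiS c'| ≤ 2*(2*S.κ+1)^S.nIt * |c - c'| := by
  have h1 : S.phiS c = ext (S.usol c) 1 := S.Uf_eq_ext c (by norm_num)
  have h2 : S.phiS c' = ext (S.usol c') 1 := S.Uf_eq_ext c' (by norm_num)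
  rw [h1, h2]
  exact (abs_ext_sub_le _ _ 1).trans (S.usol_lip c c')

lemma rho_lip (c c' : ℝ) : |S.rhoS c - S.rhoS c'| ≤ 2*(2*S.κ+1)^S.nIt * |c - c'| := by
  refine le_trans ?_ (S.usol_lip c c')
  unfold rhoS
  refine (abs_norm_sub_norm_le _ _).trans ?_
  rw [← dist_eq_norm]
  rw [ContinuousMap.dist_le dist_nonneg]
  intro x
  rw [Real.dist_eq]
  simp only [ContinuousMap.sup_apply, ContinuousMap.zero_apply]
  exact (abs_max_sub_max_le_abs _ _ _).trans
    (by rw [← Real.dist_eq]; exact ContinuousMap.dist_apply_le_dist x)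

lemma lip_continuous {g : ℝ → ℝ} {A : ℝ} (hA : 0 ≤ A)
    (h : ∀ c c', |g c - g c'| ≤ A * |c - c'|) : Continuous g := by
  refine (LipschitzWith.of_dist_le_mul (K := ⟨A, hA⟩) fun x y => ?_).continuous
  rw [Real.dist_eq, Real.dist_eq]
  exact h x y

lemma phi_cont : Continuous S.phiS := by
  have hκ0 := S.hκ0
  exact lip_continuous (by positivity) S.phi_lip

lemma rho_cont : Continuous S.rhoS := by
  have hκ0 := S.hκ0
  exact lip_continuous (by positivity) S.rho_lip

lemma hasDeriv_primitive {w : ℝ → ℝ} (hw : Continuous w) (t : ℝ) :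
    HasDerivAt (fun r => ∫ s in (0:ℝ)..r, w s) (w t) t :=
  integral_hasDerivAt_right (hw.intervalIntegrable _ _)
    (hw.stronglyMeasurable.stronglyMeasurableAtFilter) hw.continuousAt

lemma Uf_hasDeriv (c t : ℝ) :
    HasDerivAt (S.Uf c) (c - ∫ s in (0:ℝ)..t, S.hf (S.usol c) s) t := by
  have hfun : S.Uf c = fun r => c * r - (r * (∫ s in (0:ℝ)..r, S.hf (S.usol c) s)
      - ∫ s in (0:ℝ)..r, s * S.hf (S.usol c) s) := funext (S.V_eq c _)
  rw [hfun]
  have h1 : HasDerivAt (fun r => ∫ s in (0:ℝ)..r, S.hf (S.usol c) s)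
      (S.hf (S.usol c) t) t := hasDeriv_primitive (S.hf_cont _) t
  have h2 : HasDerivAt (fun r => ∫ s in (0:ℝ)..r, s * S.hf (S.usol c) s)
      (t * S.hf (S.usol c) t) t :=
    hasDeriv_primitive (continuous_id'.fun_mul (S.hf_cont _)) t
  have h3 : HasDerivAt (fun r : ℝ => r * ∫ s in (0:ℝ)..r, S.hf (S.usol c) s)
      (1 * (∫ s in (0:ℝ)..t, S.hf (S.usol c) s) + t * S.hf (S.usol c) t) t :=
    (hasDerivAt_id t).fun_mul h1
  have h4 : HasDerivAt (fun r : ℝ => c * r) (c * 1) t := (hasDerivAt_id t).const_mul c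
  have h5 := h4.fun_sub (h3.fun_sub h2)
  exact h5.congr_deriv (by ring)

noncomputable def Ud (c : ℝ) : ℝ → ℝ := fun t => c - ∫ s in (0:ℝ)..t, S.hf (S.usol c) s

lemma Ud_hasDeriv (c t : ℝ) : HasDerivAt (S.Ud c) (-(S.hf (S.usol c) t)) t := by
  have h1 := hasDeriv_primitive (S.hf_cont (S.usol c)) t
  have := (hasDerivAt_const t c).fun_sub h1
  exact this.congr_deriv (by ring)

lemma Uf_zero (c : ℝ) : S.Uf c 0 = 0 := by
  show S.V c _ 0 = 0
  unfold V
  simp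

lemma phiS_eq (c : ℝ) : S.phiS c = c - ∫ s in (0:ℝ)..1, (1-s) * S.hf (S.usol c) s := by
  show S.V c _ 1 = _
  unfold V
  ring_nf

lemma Uf_le (c : ℝ) {t : ℝ} (ht : t ∈ Icc (0:ℝ) 1) : S.Uf c t ≤ c * t := by
  show S.V c _ t ≤ c * t
  unfold V
  have : 0 ≤ ∫ s in (0:ℝ)..t, (t - s) * S.hf (S.usol c) s :=
    integral_nonneg ht.1 (fun s hs =>
      mul_nonneg (by linarith [hs.2]) (S.hf_nonneg _ s))
  linarith

/-- the Green-representation identity for fixed points -/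
lemma green (c : ℝ) {t : ℝ} (ht : t ∈ Icc (0:ℝ) 1) :
    S.Uf c t = t * S.phiS c + ((∫ s in (0:ℝ)..t, s*(1-t) * S.hf (S.usol c) s)
      + ∫ s in t..(1:ℝ), t*(1-s) * S.hf (S.usol c) s) := by
  set h := S.hf (S.usol c) with hh
  have hc : Continuous h := S.hf_cont _
  have i1 : IntervalIntegrable (fun s => (1-s) * h s) MeasureTheory.volume 0 t :=
    ((continuous_const.fun_sub continuous_id').fun_mul hc).intervalIntegrable _ _
  have i1' : IntervalIntegrable (fun s => (1-s) * h s) MeasureTheory.volume t 1 :=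
    ((continuous_const.fun_sub continuous_id').fun_mul hc).intervalIntegrable _ _
  have A3 : (∫ s in (0:ℝ)..1, (1-s) * h s)
      = (∫ s in (0:ℝ)..t, (1-s) * h s) + ∫ s in t..(1:ℝ), (1-s) * h s :=
    (integral_add_adjacent_intervals i1 i1').symm
  have A1 : (∫ s in (0:ℝ)..t, (t-s) * h s)
      = t * (∫ s in (0:ℝ)..t, (1-s) * h s) - ∫ s in (0:ℝ)..t, s*(1-t) * h s := by
    rw [← integral_const_mul, ← integral_sub
      ((continuous_const.fun_mul ((continuous_const.fun_sub continuous_id').fun_mul hc)).intervalIntegrable _ _)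
      (((continuous_id'.fun_mul continuous_const).fun_mul hc).intervalIntegrable _ _)]
    apply integral_congr; intro s _; ring
  have A2 : (∫ s in t..(1:ℝ), t*(1-s) * h s) = t * ∫ s in t..(1:ℝ), (1-s) * h s := by
    rw [← integral_const_mul]
    apply integral_congr; intro s _; ring
  have hUf : S.Uf c t = c * t - ∫ s in (0:ℝ)..t, (t-s) * h s := rfl
  have hphi := S.phiS_eq c
  rw [hUf, hphi, A1, A2, A3]
  ring

lemma Uf_nonneg (c : ℝ) (hφ : 0 ≤ S.phiS c) : ∀ t ∈ Icc (0:ℝ) 1, 0 ≤ S.Uf c t := by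
  intro t ht
  rw [S.green c ht]
  have h1 : 0 ≤ ∫ s in (0:ℝ)..t, s*(1-t) * S.hf (S.usol c) s :=
    integral_nonneg ht.1 (fun s hs =>
      mul_nonneg (mul_nonneg hs.1 (by linarith [ht.2])) (S.hf_nonneg _ s))
  have h2 : 0 ≤ ∫ s in t..(1:ℝ), t*(1-s) * S.hf (S.usol c) s :=
    integral_nonneg ht.2 (fun s hs =>
      mul_nonneg (mul_nonneg ht.1 (by linarith [hs.2])) (S.hf_nonneg _ s))
  nlinarith [ht.1, mul_nonneg ht.1 hφ]

lemma max_ext_le_rho (c : ℝ) (s : ℝ) : max (ext (S.usol c) s) 0 ≤ S.rhoS c := by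
  have h1 : (S.usol c ⊔ 0) ⟨cl s, cl_mem s⟩ = max (ext (S.usol c) s) 0 := by
    simp [ContinuousMap.sup_apply, ext]
  calc max (ext (S.usol c) s) 0 = (S.usol c ⊔ 0) ⟨cl s, cl_mem s⟩ := h1.symm
    _ ≤ |(S.usol c ⊔ 0) ⟨cl s, cl_mem s⟩| := le_abs_self _
    _ ≤ ‖S.usol c ⊔ 0‖ := by
        rw [← Real.norm_eq_abs]
        exact ContinuousMap.norm_coe_le_norm _ _
    _ = S.rhoS c := rfl

lemma rho_nonneg (c : ℝ) : 0 ≤ S.rhoS c := norm_nonneg _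

lemma Uf_le_rho (c : ℝ) {t : ℝ} (ht : t ∈ Icc (0:ℝ) 1) : S.Uf c t ≤ S.rhoS c := by
  rw [S.Uf_eq_ext c ht]
  exact (le_max_left _ _).trans (S.max_ext_le_rho c t)

lemma rho_le (c : ℝ) {R : ℝ} (hR : 0 ≤ R) (h : ∀ t ∈ Icc (0:ℝ) 1, S.Uf c t ≤ R) :
    S.rhoS c ≤ R := by
  rw [rhoS, ContinuousMap.norm_le _ hR]
  intro x
  simp only [ContinuousMap.sup_apply, ContinuousMap.zero_apply]
  rw [Real.norm_eq_abs, abs_of_nonneg (le_max_right _ _)]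
  apply max_le _ hR
  rw [← ext_eq _ x.2, ← S.Uf_eq_ext c x.2]
  exact h x x.2

lemma hf_le_rho (c : ℝ) (s : ℝ) : S.hf (S.usol c) s ≤ (S.rhoS c)^2 + S.q s := by
  unfold hf
  exact add_le_add (gc_le_sq S.hκ0 (S.max_ext_le_rho c s)) le_rfl

lemma hf_eq (c : ℝ) (hc0 : 0 ≤ c) (hcκ : c ≤ S.κ) {s : ℝ} (hs : s ∈ Icc (0:ℝ) 1) :
    S.hf (S.usol c) s = max (S.Uf c s) 0 ^ 2 + S.q s := by
  unfold hf
  rw [← S.Uf_eq_ext c hs]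
  congr 1
  apply gc_eq_sq_max
  apply max_le _ S.hκ0
  calc S.Uf c s ≤ c * s := S.Uf_le c hs
    _ ≤ S.κ := by nlinarith [hs.1, hs.2]

noncomputable def ker (t : ℝ) : ℝ :=
  (∫ s in (0:ℝ)..t, s*(1-t) * S.q s) + ∫ s in t..(1:ℝ), t*(1-s) * S.q s

lemma ker_zero : S.ker 0 = 0 := by
  unfold ker
  simp

/-- key quadratic estimate when the solution comes back to zero -/
lemma rho_quad (c : ℝ) (hc0 : 0 ≤ c) (hφ : S.phiS c ≤ 0) {μ : ℝ}
    (hμ : ∀ t ∈ Icc (0:ℝ) 1, S.ker t ≤ μ) (hμ0 : 0 ≤ μ) :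
    S.rhoS c ≤ (S.rhoS c)^2/8 + μ := by
  set ρ := S.rhoS c with hρdef
  rcases le_or_gt ρ 0 with hρ | hρ
  · have : ρ = 0 := le_antisymm hρ (S.rho_nonneg c)
    rw [this]; norm_num; exact hμ0
  -- maximum point
  obtain ⟨ts, hts, hmax⟩ := isCompact_Icc.exists_isMaxOn (α := ℝ)
    (⟨0, by norm_num⟩ : (Icc (0:ℝ) 1).Nonempty) (S.Uf_cont c).continuousOn
  have hmax' : ∀ t ∈ Icc (0:ℝ) 1, S.Uf c t ≤ S.Uf c ts := fun t ht => hmax ht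
  have hUts : S.Uf c ts = ρ := by
    have h1 : ρ ≤ max (S.Uf c ts) 0 :=
      S.rho_le c (le_max_right _ _) (fun t ht => (hmax' t ht).trans (le_max_left _ _))
    have h2 : S.Uf c ts ≤ ρ := S.Uf_le_rho c hts
    rcases le_or_gt (S.Uf c ts) 0 with h3 | h3
    · rw [max_eq_right h3] at h1; linarith
    · rw [max_eq_left h3.le] at h1; linarith
  have hts1 : ts < 1 := by
    rcases lt_or_eq_of_le hts.2 with h | h
    · exact h
    · exfalso; rw [h] at hUts; change S.phiS c = ρ at hUts; linarith
  have hts0 : 0 < ts := by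
    rcases lt_or_eq_of_le hts.1 with h | h
    · exact h
    · exfalso; rw [← h] at hUts; rw [S.Uf_zero c] at hUts; linarith
  -- return time T
  have hU1 : S.Uf c 1 = S.phiS c := rfl
  obtain ⟨T, hTmem, hUT⟩ : ∃ T ∈ Icc ts 1, S.Uf c T = 0 := by
    have hsub := intermediate_value_Icc' hts1.le (S.Uf_cont c).continuousOn
    have h0mem : (0:ℝ) ∈ Icc (S.Uf c 1) (S.Uf c ts) := ⟨by rw [hU1]; exact hφ, by linarith⟩
    obtain ⟨T, hT, hUT⟩ := hsub h0mem
    exact ⟨T, hT, hUT⟩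
  have hT1 : T ≤ 1 := hTmem.2
  have hTts : ts ≤ T := hTmem.1
  have hT0 : 0 < T := lt_of_lt_of_le hts0 hTts
  set h := S.hf (S.usol c) with hhdef
  have hc : Continuous h := S.hf_cont _
  have hnn : ∀ s, 0 ≤ h s := S.hf_nonneg _
  have hle : ∀ s, h s ≤ ρ^2 + S.q s := S.hf_le_rho c
  -- the two value identities
  have e1 : ρ = c * ts - ∫ s in (0:ℝ)..ts, (ts - s) * h s := by rw [← hUts]; rfl
  have e2 : c * T = ∫ s in (0:ℝ)..T, (T - s) * h s := by
    have : S.Uf c T = c * T - ∫ s in (0:ℝ)..T, (T - s) * h s := rfl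
    rw [hUT] at this; linarith
  -- the key splitting identity
  have esplit : (∫ s in (0:ℝ)..T, (T - s) * h s)
      = (∫ s in (0:ℝ)..ts, (T - s) * h s) + ∫ s in ts..T, (T - s) * h s :=
    (integral_add_adjacent_intervals (S.intgW _ _ 0 _ _) (S.intgW _ _ 0 _ _)).symm
  have l1 : (∫ s in (0:ℝ)..ts, s*(T - ts) * h s)
      = ts * (∫ s in (0:ℝ)..ts, (T - s) * h s) - T * ∫ s in (0:ℝ)..ts, (ts - s) * h s := by
    rw [← integral_const_mul, ← integral_const_mul, ← integral_sub
      ((continuous_const.fun_mul ((continuous_const.fun_sub continuous_id').fun_mul hc)).intervalIntegrable _ _)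
      ((continuous_const.fun_mul ((continuous_const.fun_sub continuous_id').fun_mul hc)).intervalIntegrable _ _)]
    apply integral_congr; intro s _; ring
  have l2 : (∫ s in ts..T, ts*(T - s) * h s) = ts * ∫ s in ts..T, (T - s) * h s := by
    rw [← integral_const_mul]; apply integral_congr; intro s _; ring
  have key : T * ρ = (∫ s in (0:ℝ)..ts, s*(T - ts) * h s) + ∫ s in ts..T, ts*(T - s) * h s := by
    rw [l1, l2]
    have := esplit
    nlinarith [e1, e2, esplit]
  -- bound the two integrals
  have b1 : (∫ s in (0:ℝ)..ts, s*(T - ts) * h s)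
      ≤ (T - ts) * ρ^2 * (ts^2/2) + T * ∫ s in (0:ℝ)..ts, s*(1-ts) * S.q s := by
    have step : (∫ s in (0:ℝ)..ts, s*(T - ts) * h s)
        ≤ ∫ s in (0:ℝ)..ts, ((T - ts) * ρ^2 * s + T * (s*(1-ts) * S.q s)) := by
      apply integral_mono_on hts.1 (((continuous_id'.fun_mul continuous_const).fun_mul hc).intervalIntegrable _ _)
        ((((continuous_const.fun_mul continuous_id')).fun_add
          (continuous_const.fun_mul ((continuous_id'.fun_mul continuous_const).fun_mul S.hq))).intervalIntegrable _ _)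
      intro s hs
      have h1 := hle s
      have h2 := hnn s
      have h3 := S.hq0 s
      have k0 : 0 ≤ s * (T - ts) := mul_nonneg hs.1 (by linarith)
      have k1 : s*(T - ts) * h s ≤ s*(T - ts) * (ρ^2 + S.q s) := by nlinarith
      have k2 : 0 ≤ s * S.q s * ts * (1 - T) :=
        mul_nonneg (mul_nonneg (mul_nonneg hs.1 h3) hts0.le) (by linarith)
      have k3 : s*(T - ts)*S.q s ≤ T*(s*(1-ts)*S.q s) := by nlinarith [k2]
      nlinarith [k1, k3]
    refine step.trans ?_
    rw [integral_add ((continuous_const.fun_mul continuous_id').intervalIntegrable _ _)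
      ((continuous_const.fun_mul ((continuous_id'.fun_mul continuous_const).fun_mul S.hq)).intervalIntegrable _ _),
      integral_const_mul, integral_const_mul, integral_id]
    ring_nf
    rfl
  have b2 : (∫ s in ts..T, ts*(T - s) * h s)
      ≤ ts * ρ^2 * ((T - ts)^2/2) + T * ∫ s in ts..T, ts*(1-s) * S.q s := by
    have step : (∫ s in ts..T, ts*(T - s) * h s)
        ≤ ∫ s in ts..T, (ts * ρ^2 * (T - s) + T * (ts*(1-s) * S.q s)) := by
      apply integral_mono_on hTts
        (((continuous_const.fun_mul (continuous_const.fun_sub continuous_id')).fun_mul hc).intervalIntegrable _ _)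
        (((continuous_const.fun_mul (continuous_const.fun_sub continuous_id')).fun_add
          (continuous_const.fun_mul ((continuous_const.fun_mul (continuous_const.fun_sub continuous_id')).fun_mul S.hq))).intervalIntegrable _ _)
      intro s hs
      have h1 := hle s
      have h2 := hnn s
      have h3 := S.hq0 s
      have hs0 : 0 ≤ s := le_trans hts0.le hs.1
      have k0 : 0 ≤ ts * (T - s) := mul_nonneg hts0.le (by linarith [hs.2])
      have k1 : ts*(T - s) * h s ≤ ts*(T - s) * (ρ^2 + S.q s) := by nlinarith
      have k2 : 0 ≤ ts * S.q s * s * (1 - T) :=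
        mul_nonneg (mul_nonneg (mul_nonneg hts0.le h3) hs0) (by linarith)
      have k3 : ts*(T - s)*S.q s ≤ T*(ts*(1-s)*S.q s) := by nlinarith [k2]
      nlinarith [k1, k3]
    refine step.trans ?_
    rw [integral_add ((continuous_const.fun_mul (continuous_const.fun_sub continuous_id')).intervalIntegrable _ _)
      ((continuous_const.fun_mul ((continuous_const.fun_mul (continuous_const.fun_sub continuous_id')).fun_mul S.hq)).intervalIntegrable _ _),
      integral_const_mul, integral_const_mul]
    have : (∫ s in ts..T, (T - s)) = (T-ts)^2/2 := by
      rw [integral_sub (intervalIntegrable_const) (continuous_id'.intervalIntegrable _ _)]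
      rw [integral_const, integral_id]
      simp only [smul_eq_mul]
      ring
    rw [this]
  have b3 : (∫ s in ts..T, ts*(1-s) * S.q s) ≤ ∫ s in ts..(1:ℝ), ts*(1-s) * S.q s := by
    have hsplit : (∫ s in ts..(1:ℝ), ts*(1-s) * S.q s)
        = (∫ s in ts..T, ts*(1-s) * S.q s) + ∫ s in T..(1:ℝ), ts*(1-s) * S.q s :=
      (integral_add_adjacent_intervals
        (((continuous_const.fun_mul (continuous_const.fun_sub continuous_id')).fun_mul S.hq).intervalIntegrable _ _)
        (((continuous_const.fun_mul (continuous_const.fun_sub continuous_id')).fun_mul S.hq).intervalIntegrable _ _)).symm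
    have hpos : 0 ≤ ∫ s in T..(1:ℝ), ts*(1-s) * S.q s :=
      integral_nonneg hT1 (fun s hs =>
        mul_nonneg (mul_nonneg hts0.le (by linarith [hs.2])) (S.hq0 s))
    linarith
  have hker := hμ ts ⟨hts.1, hts.2⟩
  unfold ker at hker
  -- put it together
  have main : T * ρ ≤ (T - ts) * ρ^2 * (ts^2/2) + ts * ρ^2 * ((T - ts)^2/2) + T * μ := by
    have hq1 : 0 ≤ ∫ s in (0:ℝ)..ts, s*(1-ts) * S.q s :=
      integral_nonneg hts.1 (fun s hs =>
        mul_nonneg (mul_nonneg hs.1 (by linarith [hts1])) (S.hq0 s))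
    have m1 : T * (∫ s in ts..T, ts*(1-s) * S.q s) ≤ T * ∫ s in ts..(1:ℝ), ts*(1-s) * S.q s :=
      mul_le_mul_of_nonneg_left b3 hT0.le
    have m2 : T * ((∫ s in (0:ℝ)..ts, s*(1-ts) * S.q s) + ∫ s in ts..(1:ℝ), ts*(1-s) * S.q s)
        ≤ T * μ := mul_le_mul_of_nonneg_left hker hT0.le
    have m3 : T * ((∫ s in (0:ℝ)..ts, s*(1-ts) * S.q s) + ∫ s in ts..(1:ℝ), ts*(1-s) * S.q s)
        = T * (∫ s in (0:ℝ)..ts, s*(1-ts) * S.q s) + T * ∫ s in ts..(1:ℝ), ts*(1-s) * S.q s := by ring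
    linarith [key, b1, b2, m1, m2]
  -- conclude
  have hquad : (T - ts) * (ts^2/2) + ts * ((T - ts)^2/2) ≤ T/8 := by
    nlinarith [mul_nonneg hT0.le (sq_nonneg (T - 2*ts)),
      mul_nonneg (mul_nonneg hT0.le (by linarith : (0:ℝ) ≤ 1 - T)) (by linarith : (0:ℝ) ≤ 1 + T)]
  nlinarith [main, hquad, sq_nonneg ρ, hT0, mul_pos hT0 hρ]

lemma phi0_neg (hpos : 0 < ∫ s in (0:ℝ)..1, (1-s) * S.q s) : S.phiS 0 < 0 := by
  rw [S.phiS_eq 0]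
  have hmono : (∫ s in (0:ℝ)..1, (1-s) * S.q s)
      ≤ ∫ s in (0:ℝ)..1, (1-s) * S.hf (S.usol 0) s := by
    apply integral_mono_on zero_le_one
      (((continuous_const.fun_sub continuous_id').fun_mul S.hq).intervalIntegrable _ _)
      (((continuous_const.fun_sub continuous_id').fun_mul (S.hf_cont _)).intervalIntegrable _ _)
    intro s hs
    have h1 : 0 ≤ 1 - s := by linarith [hs.2]
    have h2 : S.q s ≤ S.hf (S.usol 0) s := by
      unfold hf; linarith [gc_nonneg S.κ (ext (S.usol 0) s)]
    exact mul_le_mul_of_nonneg_left h2 h1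
  linarith

lemma exists_phi_pos {μ : ℝ} (hμ : ∀ t ∈ Icc (0:ℝ) 1, S.ker t ≤ μ) (hμ2 : μ < 2) :
    ∃ cs ∈ Icc (0:ℝ) (S.F + 17), 0 < S.phiS cs := by
  have hμ0 : 0 ≤ μ := by have := hμ 0 ⟨le_refl _, zero_le_one⟩; rw [S.ker_zero] at this; linarith
  by_contra hcon
  push_neg at hcon
  set C := S.F + 17 with hC
  have hF0 := S.hF0
  have hκ1 := S.hκ1
  have hκeq := S.hκeq
  have hC0 : 0 < C := by rw [hC]; linarith
  have hHb := S.Hb_pos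
  have hCHb : C < 2 * S.Hb := by
    have : S.κ^2 ≥ S.κ := by nlinarith
    have : S.κ ≥ S.F + 29415 := le_of_eq hκeq.symm
    unfold Hb
    nlinarith
  have hφC : S.phiS C ≤ 0 := hcon C ⟨hC0.le, le_refl _⟩
  set t0 := C / (2 * S.Hb) with ht0def
  have ht00 : 0 < t0 := div_pos hC0 (by linarith)
  have ht01 : t0 < 1 := (div_lt_one (by linarith)).2 hCHb
  -- U C t0 > 0
  have hU0 : 0 < S.Uf C t0 := by
    have hint : (∫ s in (0:ℝ)..t0, (t0 - s) * S.hf (S.usol C) s)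
        ≤ ∫ s in (0:ℝ)..t0, t0 * S.Hb := by
      apply integral_mono_on ht00.le (S.intgW _ _ 0 _ _)
        (intervalIntegrable_const)
      intro s hs
      have h1 := S.hf_le_H (S.usol C) s
      have h2 := S.hf_nonneg (S.usol C) s
      nlinarith [hs.1, hs.2]
    rw [integral_const, smul_eq_mul] at hint
    have hUf : S.Uf C t0 = C * t0 - ∫ s in (0:ℝ)..t0, (t0 - s) * S.hf (S.usol C) s := rfl
    have hHt0 : S.Hb * t0 = C / 2 := by
      rw [ht0def]; field_simp
    rw [hUf]
    have : (t0 - 0) * (t0 * S.Hb) = t0 * (C/2) := by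
      rw [show t0 * S.Hb = S.Hb * t0 by ring, hHt0]; ring
    rw [this] at hint
    nlinarith [mul_pos ht00 hC0]
  -- find zero T
  obtain ⟨T, hTmem, hUT⟩ : ∃ T ∈ Icc t0 1, S.Uf C T = 0 := by
    have hsub := intermediate_value_Icc' ht01.le (S.Uf_cont C).continuousOn
    have h0mem : (0:ℝ) ∈ Icc (S.Uf C 1) (S.Uf C t0) := ⟨hφC, hU0.le⟩
    obtain ⟨T, hT, hUTz⟩ := hsub h0mem
    exact ⟨T, hT, hUTz⟩
  have hT0 : 0 < T := lt_of_lt_of_le ht00 hTmem.1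
  have hT1 : T ≤ 1 := hTmem.2
  set ρ := S.rhoS C with hρdef
  have hρ0 := S.rho_nonneg C
  -- C ≤ ρ² + F
  have e2 : C * T = ∫ s in (0:ℝ)..T, (T - s) * S.hf (S.usol C) s := by
    have : S.Uf C T = C * T - ∫ s in (0:ℝ)..T, (T - s) * S.hf (S.usol C) s := rfl
    rw [hUT] at this; linarith
  have hbd : (∫ s in (0:ℝ)..T, (T - s) * S.hf (S.usol C) s)
      ≤ ∫ s in (0:ℝ)..T, T * (ρ^2 + S.F) := by
    apply integral_mono_on hT0.le (S.intgW _ _ 0 _ _) intervalIntegrable_const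
    intro s hs
    have h1 := S.hf_le_rho C s
    have h2 := S.hqF s
    have h3 := S.hf_nonneg (S.usol C) s
    nlinarith [hs.1, hs.2]
  rw [integral_const, smul_eq_mul, sub_zero] at hbd
  have hCle : C ≤ ρ^2 + S.F := by
    have hT2 : T * (T * (ρ^2 + S.F)) ≤ T * (ρ^2 + S.F) := by
      have hX : 0 ≤ ρ^2 + S.F := by positivity
      nlinarith [mul_nonneg (mul_nonneg hT0.le hX) (by linarith : (0:ℝ) ≤ 1 - T)]
    have : C * T ≤ T * (ρ^2 + S.F) := by linarith [e2, hbd]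
    have hdiv := (mul_le_mul_iff_of_pos_right hT0).mp (by linarith [this] : C * T ≤ (ρ^2 + S.F) * T)
    exact hdiv
  have hρ4 : 4 < ρ := by nlinarith
  -- rho at 0 is 0
  have hρz : S.rhoS 0 ≤ 4 := by
    apply S.rho_le 0 (by norm_num)
    intro t ht
    have := S.Uf_le 0 ht
    simpa using this.trans (by norm_num)
  -- IVT for rho
  obtain ⟨c₀, hc₀mem, hc₀⟩ : ∃ c₀ ∈ Icc (0:ℝ) C, S.rhoS c₀ = 4 := by
    have hsub := intermediate_value_Icc hC0.le S.rho_cont.continuousOn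
    have : (4:ℝ) ∈ Icc (S.rhoS 0) (S.rhoS C) := ⟨hρz, by linarith⟩
    obtain ⟨c₀, hmem, heq⟩ := hsub this
    exact ⟨c₀, hmem, heq⟩
  have := S.rho_quad c₀ hc₀mem.1 (hcon c₀ hc₀mem) hμ hμ0
  rw [hc₀] at this
  norm_num at this
  linarith

/-- a priori bound for c whenever φ(c) ≥ 0 -/
lemma phi_nonneg_bound (c : ℝ) (hc0 : 0 ≤ c) (hcκ : c ≤ S.κ) (hφ : 0 ≤ S.phiS c) :
    c ≤ S.F + 29412 := by
  set β := S.phiS c with hβ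
  set h := S.hf (S.usol c) with hhdef
  have hcont : Continuous h := S.hf_cont _
  have hnn : ∀ s, 0 ≤ h s := S.hf_nonneg _
  set ρ := S.rhoS c with hρdef
  have hρ0 := S.rho_nonneg c
  have hUnn : ∀ t ∈ Icc (0:ℝ) 1, 0 ≤ S.Uf c t := S.Uf_nonneg c hφ
  set J := ∫ s in (0:ℝ)..1, s*(1-s) * h s with hJ
  have intJ : ∀ a b : ℝ, IntervalIntegrable (fun s => s*(1-s) * h s) MeasureTheory.volume a b :=
    fun a b => (((continuous_id'.fun_mul (continuous_const.fun_sub continuous_id'))).fun_mul hcont).intervalIntegrable a b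
  have hJ0 : 0 ≤ J :=
    integral_nonneg zero_le_one (fun s hs =>
      mul_nonneg (mul_nonneg hs.1 (by linarith [hs.2])) (hnn s))
  -- upper bound on Uf
  have hub : ∀ t ∈ Icc (0:ℝ) 1, S.Uf c t ≤ β + J := by
    intro t ht
    rw [S.green c ht]
    have m1 : (∫ s in (0:ℝ)..t, s*(1-t) * h s) ≤ ∫ s in (0:ℝ)..t, s*(1-s) * h s := by
      apply integral_mono_on ht.1
        (((continuous_id'.fun_mul continuous_const).fun_mul hcont).intervalIntegrable _ _) (intJ _ _)
      intro s hs
      have : 1 - t ≤ 1 - s := by linarith [hs.2]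
      nlinarith [mul_nonneg (mul_nonneg hs.1 (hnn s)) (show (0:ℝ) ≤ t - s by linarith [hs.2])]
    have m2 : (∫ s in t..(1:ℝ), t*(1-s) * h s) ≤ ∫ s in t..(1:ℝ), s*(1-s) * h s := by
      apply integral_mono_on ht.2
        (((continuous_const.fun_mul (continuous_const.fun_sub continuous_id')).fun_mul hcont).intervalIntegrable _ _) (intJ _ _)
      intro s hs
      have h1 : t ≤ s := hs.1
      have h2 : 0 ≤ 1 - s := by linarith [hs.2]
      nlinarith [mul_nonneg (mul_nonneg h2 (hnn s)) (show (0:ℝ) ≤ s - t by linarith)]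
    have hJsplit : J = (∫ s in (0:ℝ)..t, s*(1-s) * h s) + ∫ s in t..(1:ℝ), s*(1-s) * h s :=
      (integral_add_adjacent_intervals (intJ _ _) (intJ _ _)).symm
    have htβ : t * β ≤ β := by nlinarith [ht.1, ht.2]
    linarith
  have hρR : ρ ≤ β + J := S.rho_le c (by linarith) hub
  -- lower bound on Uf on [1/4,3/4]
  have hlb : ∀ t ∈ Icc (1/4:ℝ) (3/4), (β + J)/4 ≤ S.Uf c t := by
    intro t ht
    have ht' : t ∈ Icc (0:ℝ) 1 := ⟨by linarith [ht.1], by linarith [ht.2]⟩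
    rw [S.green c ht']
    have m1 : (∫ s in (0:ℝ)..t, (1/4) * (s*(1-s) * h s)) ≤ ∫ s in (0:ℝ)..t, s*(1-t) * h s := by
      apply integral_mono_on ht'.1
        ((continuous_const.fun_mul ((continuous_id'.fun_mul (continuous_const.fun_sub continuous_id')).fun_mul hcont)).intervalIntegrable _ _)
        (((continuous_id'.fun_mul continuous_const).fun_mul hcont).intervalIntegrable _ _)
      intro s hs
      have h1 : 1/4 ≤ 1 - t := by linarith [ht.2]
      have h2 : 1 - s ≤ 1 := by linarith [hs.1]
      nlinarith [mul_nonneg (mul_nonneg hs.1 (hnn s))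
        (show (0:ℝ) ≤ (1-t) - (1-s)/4 by linarith [hs.1])]
    have m2 : (∫ s in t..(1:ℝ), (1/4) * (s*(1-s) * h s)) ≤ ∫ s in t..(1:ℝ), t*(1-s) * h s := by
      apply integral_mono_on ht'.2
        ((continuous_const.fun_mul ((continuous_id'.fun_mul (continuous_const.fun_sub continuous_id')).fun_mul hcont)).intervalIntegrable _ _)
        (((continuous_const.fun_mul (continuous_const.fun_sub continuous_id')).fun_mul hcont).intervalIntegrable _ _)
      intro s hs
      have h1 : 1/4 ≤ t := ht.1
      have h2 : s ≤ 1 := hs.2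
      have h3 : 0 ≤ 1 - s := by linarith
      have h4 : t ≤ s := hs.1
      nlinarith [mul_nonneg (mul_nonneg h3 (hnn s))
        (show (0:ℝ) ≤ t - s/4 by linarith [ht'.1])]
    have hJsplit : J = (∫ s in (0:ℝ)..t, s*(1-s) * h s) + ∫ s in t..(1:ℝ), s*(1-s) * h s :=
      (integral_add_adjacent_intervals (intJ _ _) (intJ _ _)).symm
    rw [integral_const_mul] at m1 m2
    have htβ : β/4 ≤ t * β := by nlinarith [ht.1, hφ]
    linarith
  -- lower bound on J
  have hJlb : 3/512 * (β + J)^2 ≤ J := by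
    have hsplit1 : J = (∫ s in (0:ℝ)..(1/4:ℝ), s*(1-s) * h s)
        + ∫ s in (1/4:ℝ)..(1:ℝ), s*(1-s) * h s :=
      (integral_add_adjacent_intervals (intJ _ _) (intJ _ _)).symm
    have hsplit2 : (∫ s in (1/4:ℝ)..(1:ℝ), s*(1-s) * h s)
        = (∫ s in (1/4:ℝ)..(3/4:ℝ), s*(1-s) * h s) + ∫ s in (3/4:ℝ)..(1:ℝ), s*(1-s) * h s :=
      (integral_add_adjacent_intervals (intJ _ _) (intJ _ _)).symm
    have hp1 : 0 ≤ ∫ s in (0:ℝ)..(1/4:ℝ), s*(1-s) * h s :=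
      integral_nonneg (by norm_num) (fun s hs =>
        mul_nonneg (mul_nonneg hs.1 (by linarith [hs.2])) (hnn s))
    have hp3 : 0 ≤ ∫ s in (3/4:ℝ)..(1:ℝ), s*(1-s) * h s :=
      integral_nonneg (by norm_num) (fun s hs =>
        mul_nonneg (mul_nonneg (by linarith [hs.1]) (by linarith [hs.2])) (hnn s))
    have hmid : (∫ s in (1/4:ℝ)..(3/4:ℝ), (3/16) * ((β + J)/4)^2)
        ≤ ∫ s in (1/4:ℝ)..(3/4:ℝ), s*(1-s) * h s := by
      apply integral_mono_on (by norm_num) intervalIntegrable_const (intJ _ _)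
      intro s hs
      have hs' : s ∈ Icc (0:ℝ) 1 := ⟨by linarith [hs.1], by linarith [hs.2]⟩
      have hU : (β + J)/4 ≤ S.Uf c s := hlb s hs
      have hU0 : 0 ≤ S.Uf c s := hUnn s hs'
      have hh : h s = max (S.Uf c s) 0 ^ 2 + S.q s := S.hf_eq c hc0 hcκ hs'
      have hmax : max (S.Uf c s) 0 = S.Uf c s := max_eq_left hU0
      have hsq : ((β + J)/4)^2 ≤ S.Uf c s ^ 2 := by
        apply pow_le_pow_left₀ (by linarith) hU
      have hss : 3/16 ≤ s * (1-s) := by nlinarith [hs.1, hs.2]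
      have hhs : ((β + J)/4)^2 ≤ h s := by
        rw [hh, hmax]; linarith [S.hq0 s]
      have hsq0 : 0 ≤ ((β + J)/4)^2 := sq_nonneg _
      have k1 : (3/16:ℝ) * ((β + J)/4)^2 ≤ (3/16) * h s :=
        mul_le_mul_of_nonneg_left hhs (by norm_num)
      have k2 : (3/16:ℝ) * h s ≤ s*(1-s) * h s := mul_le_mul_of_nonneg_right hss (hnn s)
      linarith
    rw [integral_const] at hmid
    simp only [smul_eq_mul] at hmid
    have : (3/4 - 1/4 : ℝ) * ((3/16) * ((β + J)/4)^2) = 3/512 * (β + J)^2 := by ring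
    rw [this] at hmid
    linarith
  -- bound β + J
  have hR : β + J ≤ 171 := by nlinarith [hJlb, hφ, hJ0]
  -- bound c
  have hcval : c = β + ∫ s in (0:ℝ)..1, (1-s) * h s := by
    have := S.phiS_eq c
    rw [← hβ] at this
    linarith
  have hint : (∫ s in (0:ℝ)..1, (1-s) * h s) ≤ ρ^2 + S.F := by
    have step : (∫ s in (0:ℝ)..1, (1-s) * h s) ≤ ∫ s in (0:ℝ)..1, (ρ^2 + S.F) := by
      apply integral_mono_on zero_le_one
        (((continuous_const.fun_sub continuous_id').fun_mul hcont).intervalIntegrable _ _)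
        intervalIntegrable_const
      intro s hs
      have h1 := S.hf_le_rho c s
      have h2 := S.hqF s
      have h3 : 1 - s ≤ 1 := by linarith [hs.1]
      have h4 : 0 ≤ 1 - s := by linarith [hs.2]
      have k1 : (1-s) * h s ≤ 1 * h s := mul_le_mul_of_nonneg_right h3 (hnn s)
      linarith
    rw [integral_const, smul_eq_mul] at step
    linarith
  have hρ171 : ρ ≤ 171 := by linarith
  have hβ171 : β ≤ 171 := by linarith
  nlinarith

lemma ker_cont : Continuous S.ker := by
  have h1 : Continuous fun t => ∫ s in (0:ℝ)..t, s * S.q s :=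
    intervalIntegral.continuous_primitive
      (fun a b => (continuous_id'.fun_mul S.hq).intervalIntegrable
        (μ := MeasureTheory.volume) a b) 0
  have h2 : Continuous fun t => ∫ s in (0:ℝ)..t, (1-s) * S.q s :=
    intervalIntegral.continuous_primitive
      (fun a b => ((continuous_const.fun_sub continuous_id').fun_mul S.hq).intervalIntegrable
        (μ := MeasureTheory.volume) a b) 0
  have heq : S.ker = fun t => (1-t) * (∫ s in (0:ℝ)..t, s * S.q s)
      + t * ((∫ s in (0:ℝ)..1, (1-s) * S.q s) - ∫ s in (0:ℝ)..t, (1-s) * S.q s) := by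
    funext t
    unfold ker
    have a1 : (∫ s in (0:ℝ)..t, s*(1-t) * S.q s) = (1-t) * ∫ s in (0:ℝ)..t, s * S.q s := by
      rw [← integral_const_mul]; apply integral_congr; intro s _; ring
    have a2 : (∫ s in t..(1:ℝ), t*(1-s) * S.q s) = t * ∫ s in t..(1:ℝ), (1-s) * S.q s := by
      rw [← integral_const_mul]; apply integral_congr; intro s _; ring
    have a3 : (∫ s in t..(1:ℝ), (1-s) * S.q s)
        = (∫ s in (0:ℝ)..1, (1-s) * S.q s) - ∫ s in (0:ℝ)..t, (1-s) * S.q s := by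
      have := integral_add_adjacent_intervals (f := fun s => (1-s) * S.q s) (μ := MeasureTheory.volume)
        (((continuous_const.fun_sub continuous_id').fun_mul S.hq).intervalIntegrable 0 t)
        (((continuous_const.fun_sub continuous_id').fun_mul S.hq).intervalIntegrable t 1)
      linarith
    rw [a1, a2, a3]
  rw [heq]
  exact ((continuous_const.fun_sub continuous_id').fun_mul h1).fun_add
    (continuous_id'.fun_mul (continuous_const.fun_sub h2))

/-- the two solutions are distinct functions on [0,1] -/
lemma Uf_ne (c₁ c₂ : ℝ) (h12 : c₁ < c₂) (hb : c₂ - c₁ ≤ S.κ) :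
    ∃ t ∈ Icc (0:ℝ) 1, S.Uf c₁ t ≠ S.Uf c₂ t := by
  have hκ1 := S.hκ1
  have hHb := S.Hb_pos
  have hHbκ : S.κ ≤ S.Hb := by unfold Hb; nlinarith [S.hF0]
  set t0 := (c₂ - c₁) / (4 * S.Hb) with ht0def
  have ht00 : 0 < t0 := div_pos (by linarith) (by linarith)
  have ht01 : t0 ≤ 1 := by
    rw [ht0def, div_le_one (by linarith)]
    linarith
  refine ⟨t0, ⟨ht00.le, ht01⟩, ?_⟩
  have hdiff : S.Uf c₂ t0 - S.Uf c₁ t0 = (c₂ - c₁) * t0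
      - ∫ s in (0:ℝ)..t0, (t0 - s) * (S.hf (S.usol c₂) s - S.hf (S.usol c₁) s) := by
    have e1 : S.Uf c₁ t0 = c₁ * t0 - ∫ s in (0:ℝ)..t0, (t0 - s) * S.hf (S.usol c₁) s := rfl
    have e2 : S.Uf c₂ t0 = c₂ * t0 - ∫ s in (0:ℝ)..t0, (t0 - s) * S.hf (S.usol c₂) s := rfl
    have e3 := integral_sub (S.intgW (S.usol c₂) t0 0 0 t0) (S.intgW (S.usol c₁) t0 0 0 t0)
    have e4 : (∫ s in (0:ℝ)..t0, ((t0-s) * S.hf (S.usol c₂) s - (t0-s) * S.hf (S.usol c₁) s))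
        = ∫ s in (0:ℝ)..t0, (t0-s) * (S.hf (S.usol c₂) s - S.hf (S.usol c₁) s) := by
      apply integral_congr; intro s _; ring
    rw [e4] at e3
    rw [e1, e2]
    linarith [e3]
  have habs : (∫ s in (0:ℝ)..t0, (t0 - s) * (S.hf (S.usol c₂) s - S.hf (S.usol c₁) s))
      ≤ t0 * (t0 * S.Hb) := by
    have step : (∫ s in (0:ℝ)..t0, (t0 - s) * (S.hf (S.usol c₂) s - S.hf (S.usol c₁) s))
        ≤ ∫ s in (0:ℝ)..t0, (t0 * S.Hb) := by
      apply integral_mono_on ht00.le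
        (((continuous_const.fun_sub continuous_id').fun_mul
          ((S.hf_cont _).fun_sub (S.hf_cont _))).intervalIntegrable _ _)
        intervalIntegrable_const
      intro s hs
      have h1 := S.hf_le_H (S.usol c₂) s
      have h2 := S.hf_nonneg (S.usol c₁) s
      have h3 := S.hf_nonneg (S.usol c₂) s
      have h4 : S.hf (S.usol c₂) s - S.hf (S.usol c₁) s ≤ S.Hb := by linarith
      have h5 : 0 ≤ t0 - s := by linarith [hs.2]
      have h6 : t0 - s ≤ t0 := by linarith [hs.1]
      nlinarith [S.hf_le_H (S.usol c₁) s]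
    rw [integral_const, smul_eq_mul, sub_zero] at step
    exact step
  have hHt0 : S.Hb * t0 = (c₂ - c₁)/4 := by
    rw [ht0def]; field_simp
  have : 0 < S.Uf c₂ t0 - S.Uf c₁ t0 := by
    rw [hdiff]
    have : t0 * (t0 * S.Hb) = t0 * ((c₂ - c₁)/4) := by
      rw [show t0 * S.Hb = S.Hb * t0 by ring, hHt0]
    rw [this] at habs
    nlinarith [mul_pos ht00 (show (0:ℝ) < c₂ - c₁ by linarith)]
  intro hcon
  rw [hcon] at this
  linarith

/-- main existence result: two zeros of the shooting function -/
lemma exists_two_zeros {μ : ℝ} (hμ : ∀ t ∈ Icc (0:ℝ) 1, S.ker t ≤ μ) (hμ2 : μ < 2)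
    (hpos : 0 < ∫ s in (0:ℝ)..1, (1-s) * S.q s) :
    ∃ c₁ c₂ : ℝ, 0 ≤ c₁ ∧ c₁ < c₂ ∧ c₂ ≤ S.κ ∧ S.phiS c₁ = 0 ∧ S.phiS c₂ = 0 := by
  have hF0 := S.hF0
  have hκeq := S.hκeq
  obtain ⟨cs, hcsmem, hcs⟩ := S.exists_phi_pos hμ hμ2
  have hφ0 := S.phi0_neg hpos
  set C₁ := S.F + 29413 with hC₁
  have hC₁κ : C₁ ≤ S.κ := by rw [hκeq, hC₁]; linarith
  have hφC₁ : S.phiS C₁ < 0 := by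
    by_contra hge
    push_neg at hge
    have := S.phi_nonneg_bound C₁ (by rw [hC₁]; linarith) hC₁κ hge
    rw [hC₁] at this
    linarith
  have hcsC₁ : cs ≤ C₁ := by
    have := hcsmem.2
    rw [hC₁]; linarith
  obtain ⟨c₁, hc₁mem, hc₁⟩ : ∃ c₁ ∈ Icc (0:ℝ) cs, S.phiS c₁ = 0 := by
    have hsub := intermediate_value_Icc hcsmem.1 S.phi_cont.continuousOn
    have : (0:ℝ) ∈ Icc (S.phiS 0) (S.phiS cs) := ⟨hφ0.le, hcs.le⟩
    obtain ⟨c₁, hmem, heq⟩ := hsub this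
    exact ⟨c₁, hmem, heq⟩
  obtain ⟨c₂, hc₂mem, hc₂⟩ : ∃ c₂ ∈ Icc cs C₁, S.phiS c₂ = 0 := by
    have hsub := intermediate_value_Icc' hcsC₁ S.phi_cont.continuousOn
    have : (0:ℝ) ∈ Icc (S.phiS C₁) (S.phiS cs) := ⟨hφC₁.le, hcs.le⟩
    obtain ⟨c₂, hmem, heq⟩ := hsub this
    exact ⟨c₂, hmem, heq⟩
  refine ⟨c₁, c₂, hc₁mem.1, ?_, le_trans hc₂mem.2 hC₁κ, hc₁, hc₂⟩
  have hne1 : c₁ ≠ cs := by intro h; rw [h] at hc₁; linarith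
  have hne2 : c₂ ≠ cs := by intro h; rw [h] at hc₂; linarith
  have := hc₁mem.2
  have := hc₂mem.1
  rcases lt_or_eq_of_le hc₁mem.2 with h | h
  · rcases lt_or_eq_of_le hc₂mem.1 with h' | h'
    · linarith
    · exact absurd h'.symm hne2
  · exact absurd h hne1

end Setup
end BVPX

namespace BVPX
namespace Setup

/-- fixed points with φ(c)=0 give BVP solutions -/
lemma Uf_isSolution (S : Setup) (f : ℝ → ℝ) (hqf : ∀ t ∈ Icc (0:ℝ) 1, S.q t = f t)
    (c : ℝ) (hc0 : 0 ≤ c) (hcκ : c ≤ S.κ) (hφ : S.phiS c = 0) :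
    IsBVPSolution f (S.Uf c) ∧ ∀ t ∈ Icc (0:ℝ) 1, 0 ≤ S.Uf c t := by
  have hUnn : ∀ t ∈ Icc (0:ℝ) 1, 0 ≤ S.Uf c t := S.Uf_nonneg c hφ.ge
  refine ⟨⟨(S.Uf_cont c).continuousOn,
    S.Ud c, fun t => -(S.hf (S.usol c) t), ?_, ?_, ?_, ?_, S.Uf_zero c, hφ⟩, hUnn⟩
  · intro t _
    have h := S.Uf_hasDeriv c t
    exact h.hasDerivWithinAt
  · intro t _
    exact (S.Ud_hasDeriv c t).hasDerivWithinAt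
  · exact (S.hf_cont (S.usol c)).neg.continuousOn
  · intro t ht
    have h1 : S.hf (S.usol c) t = max (S.Uf c t) 0 ^ 2 + S.q t := S.hf_eq c hc0 hcκ ht
    have h2 : max (S.Uf c t) 0 = S.Uf c t := max_eq_left (hUnn t ht)
    rw [neg_neg, h1, h2, hqf t ht]

end Setup

/-- positivity of the weighted integral of a nonneg continuous function positive somewhere -/
lemma pos_int {q : ℝ → ℝ} (hqc : Continuous q) (hq0 : ∀ t, 0 ≤ q t)
    {t₁ : ℝ} (ht₁ : t₁ ∈ Icc (0:ℝ) 1) (hpos : 0 < q t₁) :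
    0 < ∫ s in (0:ℝ)..1, (1-s) * q s := by
  have hcont := hqc.continuousAt (x := t₁)
  rw [Metric.continuousAt_iff] at hcont
  obtain ⟨ε, hε, hball⟩ := hcont (q t₁ / 2) (by linarith)
  set δ := q t₁ / 2 with hδ
  have hδ0 : 0 < δ := by rw [hδ]; linarith
  set a := max (t₁ - ε/2) 0 with ha
  set b := min (t₁ + ε/2) 1 with hb
  have hab : a < b := by
    apply lt_min
    · apply max_lt <;> [linarith; linarith [ht₁.1]]
    · apply max_lt <;> [linarith [ht₁.2]; norm_num]
  have ha0 : 0 ≤ a := le_max_right _ _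
  have hb1 : b ≤ 1 := min_le_right _ _
  have hqδ : ∀ s ∈ Icc a b, δ ≤ q s := by
    intro s hs
    have h1 : t₁ - ε/2 ≤ a := le_max_left _ _
    have h2 : b ≤ t₁ + ε/2 := min_le_left _ _
    have : |s - t₁| < ε := by
      rw [abs_lt]
      constructor <;> [linarith [hs.1]; linarith [hs.2]]
    have := hball (by rwa [Real.dist_eq])
    rw [Real.dist_eq, abs_lt] at this
    rw [hδ]; linarith [this.1]
  have hsplit1 : (∫ s in (0:ℝ)..1, (1-s) * q s)
      = (∫ s in (0:ℝ)..a, (1-s) * q s) + ∫ s in a..(1:ℝ), (1-s) * q s :=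
    (integral_add_adjacent_intervals (μ := MeasureTheory.volume)
      (((continuous_const.fun_sub continuous_id').fun_mul hqc).intervalIntegrable _ _)
      (((continuous_const.fun_sub continuous_id').fun_mul hqc).intervalIntegrable _ _)).symm
  have hsplit2 : (∫ s in a..(1:ℝ), (1-s) * q s)
      = (∫ s in a..b, (1-s) * q s) + ∫ s in b..(1:ℝ), (1-s) * q s :=
    (integral_add_adjacent_intervals (μ := MeasureTheory.volume)
      (((continuous_const.fun_sub continuous_id').fun_mul hqc).intervalIntegrable _ _)
      (((continuous_const.fun_sub continuous_id').fun_mul hqc).intervalIntegrable _ _)).symm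
  have hp1 : 0 ≤ ∫ s in (0:ℝ)..a, (1-s) * q s :=
    integral_nonneg ha0 (fun s hs =>
      mul_nonneg (by linarith [hs.2, hab, hb1]) (hq0 s))
  have hp3 : 0 ≤ ∫ s in b..(1:ℝ), (1-s) * q s :=
    integral_nonneg hb1 (fun s hs => mul_nonneg (by linarith [hs.2]) (hq0 s))
  have hmid : (∫ s in a..b, δ * (1-s)) ≤ ∫ s in a..b, (1-s) * q s := by
    apply integral_mono_on hab.le
      ((continuous_const.fun_mul (continuous_const.fun_sub continuous_id')).intervalIntegrable _ _)
      (((continuous_const.fun_sub continuous_id').fun_mul hqc).intervalIntegrable _ _)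
    intro s hs
    have h1 := hqδ s hs
    have h2 : 0 ≤ 1 - s := by linarith [hs.2]
    nlinarith
  have hval : (∫ s in a..b, δ * (1-s)) = δ * ((b - a) - (b^2 - a^2)/2) := by
    rw [integral_const_mul, integral_sub (intervalIntegrable_const)
      (continuous_id'.intervalIntegrable _ _), integral_const, integral_id]
    simp only [smul_eq_mul]
    ring
  have hpos2 : 0 < δ * ((b - a) - (b^2 - a^2)/2) := by
    apply mul_pos hδ0
    nlinarith [hab, hb1, ha0]
  linarith

end BVPX

namespace BVPX

lemma greenG_cont (t : ℝ) : Continuous fun s => greenG t s := by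
  unfold greenG
  apply Continuous.if_le (continuous_const.fun_mul (continuous_const.fun_sub continuous_id'))
    (continuous_id'.fun_mul continuous_const) continuous_const continuous_id'
  intro x hx
  rw [← hx]

lemma green_split {f q : ℝ → ℝ} (hqc : Continuous q)
    (hqf : ∀ s ∈ Icc (0:ℝ) 1, q s = f s) {t : ℝ} (ht : t ∈ Icc (0:ℝ) 1) :
    (∫ s in (0:ℝ)..1, greenG t s * f s)
      = (∫ s in (0:ℝ)..t, s*(1-t) * q s) + ∫ s in t..(1:ℝ), t*(1-s) * q s := by
  have step1 : (∫ s in (0:ℝ)..1, greenG t s * f s) = ∫ s in (0:ℝ)..1, greenG t s * q s := by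
    apply integral_congr
    intro s hs
    rw [uIcc_of_le zero_le_one] at hs
    show greenG t s * f s = greenG t s * q s
    rw [hqf s hs]
  have hint : ∀ a b : ℝ, IntervalIntegrable (fun s => greenG t s * q s) MeasureTheory.volume a b :=
    fun a b => ((greenG_cont t).fun_mul hqc).intervalIntegrable a b
  have step2 : (∫ s in (0:ℝ)..1, greenG t s * q s)
      = (∫ s in (0:ℝ)..t, greenG t s * q s) + ∫ s in t..(1:ℝ), greenG t s * q s :=
    (integral_add_adjacent_intervals (hint 0 t) (hint t 1)).symm
  have step3 : (∫ s in (0:ℝ)..t, greenG t s * q s) = ∫ s in (0:ℝ)..t, s*(1-t) * q s := by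
    apply integral_congr
    intro s hs
    rw [uIcc_of_le ht.1] at hs
    show greenG t s * q s = s*(1-t) * q s
    unfold greenG
    by_cases h : t ≤ s
    · have hst : s = t := le_antisymm hs.2 h
      rw [if_pos h, hst]
    · rw [if_neg h]
  have step4 : (∫ s in t..(1:ℝ), greenG t s * q s) = ∫ s in t..(1:ℝ), t*(1-s) * q s := by
    apply integral_congr
    intro s hs
    rw [uIcc_of_le ht.2] at hs
    show greenG t s * q s = t*(1-s) * q s
    unfold greenG
    rw [if_pos hs.1]
  rw [step1, step2, step3, step4]

end BVPX

open BVPX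

/-- Example 1 of the paper: for continuous `f ≥ 0`, not identically zero, if
`u₀(t) = ∫₀¹ G(t,s)f(s) ds` satisfies the smallness condition `4·B·‖u₀‖_∞ < 1` with
`B = 1/8`, then the BVP `−u″ = u² + f`, `u(0) = u(1) = 0` has at least two distinct
nonnegative `C²` solutions. -/
theorem bvp_two_nonnegative_solutions (f : ℝ → ℝ)
    (hf : ContinuousOn f (Icc 0 1)) (hfnn : ∀ t ∈ Icc (0 : ℝ) 1, 0 ≤ f t)
    (hfne : ∃ t ∈ Icc (0 : ℝ) 1, f t ≠ 0)
    (u₀ : ℝ → ℝ) (hu₀ : ∀ t, u₀ t = ∫ s in (0 : ℝ)..1, greenG t s * f s)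
    (hsmall : 4 * (1 / 8 : ℝ) * sSup ((fun t => |u₀ t|) '' Icc 0 1) < 1) :
    ∃ u v : ℝ → ℝ,
      IsBVPSolution f u ∧ IsBVPSolution f v ∧
      (∀ t ∈ Icc (0 : ℝ) 1, 0 ≤ u t) ∧ (∀ t ∈ Icc (0 : ℝ) 1, 0 ≤ v t) ∧
      ∃ t ∈ Icc (0 : ℝ) 1, u t ≠ v t := by
  classical
  set ft : ℝ → ℝ := fun t => f (cl t) with hft
  have hftc : Continuous ft := hf.comp_continuous continuous_cl cl_mem
  have hfteq : ∀ t ∈ Icc (0:ℝ) 1, ft t = f t := fun t ht => by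
    rw [hft]; simp only [cl_eq ht]
  have hft0 : ∀ t, 0 ≤ ft t := fun t => hfnn _ (cl_mem t)
  obtain ⟨F0, hF0⟩ := isCompact_Icc.bddAbove_image hf
  set F := max F0 0 with hFdef
  have hqF : ∀ t, ft t ≤ F :=
    fun t => le_trans (hF0 (Set.mem_image_of_mem f (cl_mem t))) (le_max_left _ _)
  set S : Setup := ⟨ft, F, F + 29415, hftc, hft0, hqF, le_max_right _ _, rfl⟩ with hS
  set μ := sSup ((fun t => |u₀ t|) '' Icc 0 1) with hμdef
  have hμ2 : μ < 2 := by linarith [hsmall]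
  have hSq : S.q = ft := rfl
  have hker_eq : ∀ t ∈ Icc (0:ℝ) 1, S.ker t = u₀ t := by
    intro t ht
    rw [hu₀ t]
    exact (green_split hftc hfteq ht).symm
  have hcont_u₀ : ContinuousOn u₀ (Icc (0:ℝ) 1) :=
    S.ker_cont.continuousOn.congr (fun t ht => (hker_eq t ht).symm)
  have hbdd : BddAbove ((fun t => |u₀ t|) '' Icc (0:ℝ) 1) :=
    isCompact_Icc.bddAbove_image hcont_u₀.abs
  have hμ : ∀ t ∈ Icc (0:ℝ) 1, S.ker t ≤ μ := by
    intro t ht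
    rw [hker_eq t ht]
    exact (le_abs_self _).trans (le_csSup hbdd (Set.mem_image_of_mem _ ht))
  obtain ⟨t₁, ht₁, hft₁⟩ := hfne
  have hpos : 0 < ∫ s in (0:ℝ)..1, (1-s) * ft s := by
    apply pos_int hftc hft0 ht₁
    rw [hfteq t₁ ht₁]
    exact lt_of_le_of_ne (hfnn t₁ ht₁) (Ne.symm hft₁)
  obtain ⟨c₁, c₂, hc₁0, h12, hc₂κ, hφ1, hφ2⟩ := S.exists_two_zeros hμ hμ2 hpos
  obtain ⟨hsol1, hnn1⟩ :=
    S.Uf_isSolution f hfteq c₁ hc₁0 (le_trans h12.le hc₂κ) hφ1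
  obtain ⟨hsol2, hnn2⟩ := S.Uf_isSolution f hfteq c₂ (by linarith) hc₂κ hφ2
  obtain ⟨t₀, ht₀, hne⟩ := S.Uf_ne c₁ c₂ h12 (by linarith)
  exact ⟨S.Uf c₁, S.Uf c₂, hsol1, hsol2, hnn1, hnn2, t₀, ht₀, hne⟩
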